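/- Parameter shift rule for repeated parameters: suppose f(θ) = tr[O · (𝒲_n ∘ 𝒰_θ ∘ 𝒲_{n-1} ∘ 𝒰_θ ∘ ⋯ ∘ 𝒰_θ ∘ 𝒲_0)(ρ)], where each 𝒰_θ is conjugation by the same Pauli rotation exp(-i(θ/2)σ) appearing n times, and 𝒲_i are fixed linear maps. Let f_{i,s} denote the same expression with the i-th occurrence of θ replaced by θ + sπ/2 (s ∈ {−1,+1}). Then f'(θ) = Σ_{i=0}^{n-1} (f_{i,+1} − f_{i,−1})/2. -/

import Mathlib

open Real Matrix

/-- The Pauli rotation unitary `U(θ) = exp(-i(θ/2)σ) = cos(θ/2)·I - i·sin(θ/2)·σ`. -/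
noncomputable def pauliRot {D : ℕ} (σ : Matrix (Fin D) (Fin D) ℂ) (θ : ℝ) :
    Matrix (Fin D) (Fin D) ℂ :=
  (Real.cos (θ / 2) : ℂ) • (1 : Matrix (Fin D) (Fin D) ℂ) -
    (Complex.I * (Real.sin (θ / 2) : ℂ)) • σ

/-- The conjugation channel `𝒰_θ(ρ) = U(θ) ρ U(θ)†`. -/
noncomputable def pauliRotChannel {D : ℕ} (σ : Matrix (Fin D) (Fin D) ℂ) (θ : ℝ)
    (ρ : Matrix (Fin D) (Fin D) ℂ) : Matrix (Fin D) (Fin D) ℂ :=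
  pauliRot σ θ * ρ * (pauliRot σ θ)ᴴ

/-- The circuit `𝒲_n ∘ 𝒰_{θ_{n-1}} ∘ 𝒲_{n-1} ∘ ⋯ ∘ 𝒰_{θ_0} ∘ 𝒲_0` with `n` Pauli rotation
channels (with angles `θs`) interleaved with fixed linear maps `W`. -/
noncomputable def rotChain {D : ℕ} (σ : Matrix (Fin D) (Fin D) ℂ) :
    (n : ℕ) →
    (Fin (n + 1) → Matrix (Fin D) (Fin D) ℂ →ₗ[ℂ] Matrix (Fin D) (Fin D) ℂ) →
    (Fin n → ℝ) → Matrix (Fin D) (Fin D) ℂ → Matrix (Fin D) (Fin D) ℂ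
  | 0, W, _, ρ => W 0 ρ
  | n + 1, W, θs, ρ =>
      W (Fin.last (n + 1)) (pauliRotChannel σ (θs (Fin.last n))
        (rotChain σ n (fun i => W i.castSucc) (fun i => θs i.castSucc) ρ))

lemma channel_expand {D : ℕ} (σ : Matrix (Fin D) (Fin D) ℂ) (hherm : σᴴ = σ)
    (t : ℝ) (X : Matrix (Fin D) (Fin D) ℂ) :
    pauliRotChannel σ t X =
      ((Real.cos (t/2)) ^ 2 : ℂ) • X
      + (Complex.I * Real.cos (t/2) * Real.sin (t/2)) • (X * σ)
      - (Complex.I * Real.cos (t/2) * Real.sin (t/2)) • (σ * X)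
      + ((Real.sin (t/2)) ^ 2 : ℂ) • (σ * X * σ) := by
  have hU : (pauliRot σ t)ᴴ = (Real.cos (t / 2) : ℂ) • (1 : Matrix (Fin D) (Fin D) ℂ)
      + (Complex.I * (Real.sin (t / 2) : ℂ)) • σ := by
    rw [pauliRot, conjTranspose_sub, conjTranspose_smul, conjTranspose_smul, conjTranspose_one,
      hherm]
    simp only [Complex.star_def, _root_.map_mul, Complex.conj_I, Complex.conj_ofReal, neg_mul,
      neg_smul, sub_neg_eq_add]
  rw [pauliRotChannel, hU, pauliRot]
  simp only [sub_mul, add_mul, mul_add, mul_sub, smul_mul_assoc, mul_smul_comm, one_mul, mul_one,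
    smul_smul, smul_sub, smul_add]
  match_scalars <;> ring_nf <;> simp [Complex.I_sq] <;> ring_nf

-- Auxiliary lemmas

-- complex coefficient shift identities
lemma shC2 (θ : ℝ) :
    ((((Real.cos ((θ + π/2)/2)) ^ 2 : ℂ)) - ((Real.cos ((θ - π/2)/2)) ^ 2 : ℂ)) / 2 =
      -((Real.cos (θ/2) : ℂ) * (Real.sin (θ/2) : ℂ)) := by
  have h2 : Real.sqrt 2 * Real.sqrt 2 = 2 := Real.mul_self_sqrt (by norm_num)
  have h : (Real.cos ((θ + π/2)/2)) ^ 2 - (Real.cos ((θ - π/2)/2)) ^ 2 =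
      -(2 * (Real.cos (θ/2) * Real.sin (θ/2))) := by
    rw [show (θ + π/2)/2 = θ/2 + π/4 by ring, show (θ - π/2)/2 = θ/2 - π/4 by ring,
      Real.cos_add, Real.cos_sub, Real.cos_pi_div_four, Real.sin_pi_div_four]
    linear_combination (-(Real.cos (θ/2) * Real.sin (θ/2))) * h2
  rw [← Complex.ofReal_pow, ← Complex.ofReal_pow, ← Complex.ofReal_sub, h]
  push_cast; ring

lemma shS2 (θ : ℝ) :
    ((((Real.sin ((θ + π/2)/2)) ^ 2 : ℂ)) - ((Real.sin ((θ - π/2)/2)) ^ 2 : ℂ)) / 2 =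
      (Real.cos (θ/2) : ℂ) * (Real.sin (θ/2) : ℂ) := by
  have h2 : Real.sqrt 2 * Real.sqrt 2 = 2 := Real.mul_self_sqrt (by norm_num)
  have h : (Real.sin ((θ + π/2)/2)) ^ 2 - (Real.sin ((θ - π/2)/2)) ^ 2 =
      2 * (Real.cos (θ/2) * Real.sin (θ/2)) := by
    rw [show (θ + π/2)/2 = θ/2 + π/4 by ring, show (θ - π/2)/2 = θ/2 - π/4 by ring,
      Real.sin_add, Real.sin_sub, Real.cos_pi_div_four, Real.sin_pi_div_four]
    linear_combination (Real.cos (θ/2) * Real.sin (θ/2)) * h2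
  rw [← Complex.ofReal_pow, ← Complex.ofReal_pow, ← Complex.ofReal_sub, h]
  push_cast; ring

lemma shCS (θ : ℝ) :
    (Complex.I * Real.cos ((θ + π/2)/2) * Real.sin ((θ + π/2)/2)
      - Complex.I * Real.cos ((θ - π/2)/2) * Real.sin ((θ - π/2)/2)) / 2 =
      Complex.I * (((Real.cos (θ/2)) ^ 2 : ℂ) - ((Real.sin (θ/2)) ^ 2 : ℂ)) / 2 := by
  have h2 : Real.sqrt 2 * Real.sqrt 2 = 2 := Real.mul_self_sqrt (by norm_num)
  have h : Real.cos ((θ + π/2)/2) * Real.sin ((θ + π/2)/2)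
      - Real.cos ((θ - π/2)/2) * Real.sin ((θ - π/2)/2) =
      (Real.cos (θ/2)) ^ 2 - (Real.sin (θ/2)) ^ 2 := by
    rw [show (θ + π/2)/2 = θ/2 + π/4 by ring, show (θ - π/2)/2 = θ/2 - π/4 by ring,
      Real.sin_add, Real.sin_sub, Real.cos_add, Real.cos_sub, Real.cos_pi_div_four,
      Real.sin_pi_div_four]
    linear_combination ((Real.cos (θ/2))^2 - (Real.sin (θ/2))^2) / 2 * h2
  calc (Complex.I * Real.cos ((θ + π/2)/2) * Real.sin ((θ + π/2)/2)
      - Complex.I * Real.cos ((θ - π/2)/2) * Real.sin ((θ - π/2)/2)) / 2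
      = Complex.I * ((((Real.cos ((θ + π/2)/2) * Real.sin ((θ + π/2)/2)
          - Real.cos ((θ - π/2)/2) * Real.sin ((θ - π/2)/2) : ℝ)) : ℂ)) / 2 := by
        push_cast; ring
    _ = _ := by rw [h]; push_cast; ring

-- derivatives of coefficient functions
lemma hdC2 (θ : ℝ) : HasDerivAt (fun t : ℝ => ((Real.cos (t/2)) ^ 2 : ℂ))
    (-((Real.cos (θ/2) : ℂ) * (Real.sin (θ/2) : ℂ))) θ := by
  have hc : HasDerivAt (fun t : ℝ => Real.cos (t/2)) (-Real.sin (θ/2) / 2) θ := by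
    have := (Real.hasDerivAt_cos (θ/2)).comp θ ((hasDerivAt_id θ).div_const 2)
    exact this.congr_deriv (by ring)
  have h := (hc.mul hc).ofReal_comp
  have hfun : (fun t : ℝ => ((Real.cos (t/2) * Real.cos (t/2) : ℝ) : ℂ))
      = fun t : ℝ => ((Real.cos (t/2)) ^ 2 : ℂ) := by
    funext t; push_cast; ring
  simp only [Pi.mul_apply] at h
  rw [hfun] at h
  convert h using 1; push_cast; ring

lemma hdS2 (θ : ℝ) : HasDerivAt (fun t : ℝ => ((Real.sin (t/2)) ^ 2 : ℂ))
    ((Real.cos (θ/2) : ℂ) * (Real.sin (θ/2) : ℂ)) θ := by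
  have hs : HasDerivAt (fun t : ℝ => Real.sin (t/2)) (Real.cos (θ/2) / 2) θ := by
    have := (Real.hasDerivAt_sin (θ/2)).comp θ ((hasDerivAt_id θ).div_const 2)
    exact this.congr_deriv (by ring)
  have h := (hs.mul hs).ofReal_comp
  have hfun : (fun t : ℝ => ((Real.sin (t/2) * Real.sin (t/2) : ℝ) : ℂ))
      = fun t : ℝ => ((Real.sin (t/2)) ^ 2 : ℂ) := by
    funext t; push_cast; ring
  simp only [Pi.mul_apply] at h
  rw [hfun] at h
  convert h using 1; push_cast; ring

lemma hdCS (θ : ℝ) : HasDerivAt (fun t : ℝ => Complex.I * Real.cos (t/2) * Real.sin (t/2))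
    (Complex.I * (((Real.cos (θ/2)) ^ 2 : ℂ) - ((Real.sin (θ/2)) ^ 2 : ℂ)) / 2) θ := by
  have hc : HasDerivAt (fun t : ℝ => Real.cos (t/2)) (-Real.sin (θ/2) / 2) θ := by
    have := (Real.hasDerivAt_cos (θ/2)).comp θ ((hasDerivAt_id θ).div_const 2)
    exact this.congr_deriv (by ring)
  have hs : HasDerivAt (fun t : ℝ => Real.sin (t/2)) (Real.cos (θ/2) / 2) θ := by
    have := (Real.hasDerivAt_sin (θ/2)).comp θ ((hasDerivAt_id θ).div_const 2)
    exact this.congr_deriv (by ring)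
  have h := ((hc.mul hs).ofReal_comp).const_mul Complex.I
  have hfun : (fun t : ℝ => Complex.I * ((Real.cos (t/2) * Real.sin (t/2) : ℝ) : ℂ))
      = fun t : ℝ => Complex.I * Real.cos (t/2) * Real.sin (t/2) := by
    funext t; push_cast; ring
  simp only [Pi.mul_apply] at h
  rw [hfun] at h
  exact h.congr_deriv (by push_cast; ring)

lemma rotChain_succ {D : ℕ} (σ : Matrix (Fin D) (Fin D) ℂ) (n : ℕ)
    (W : Fin (n + 2) → Matrix (Fin D) (Fin D) ℂ →ₗ[ℂ] Matrix (Fin D) (Fin D) ℂ)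
    (θs : Fin (n + 1) → ℝ) (ρ : Matrix (Fin D) (Fin D) ℂ) :
    rotChain σ (n + 1) W θs ρ =
      W (Fin.last (n + 1)) (pauliRotChannel σ (θs (Fin.last n))
        (rotChain σ n (fun i => W i.castSucc) (fun i => θs i.castSucc) ρ)) := rfl

lemma key {D : ℕ} (σ : Matrix (Fin D) (Fin D) ℂ) (hherm : σᴴ = σ) :
    ∀ (n : ℕ) (W : Fin (n + 1) → Matrix (Fin D) (Fin D) ℂ →ₗ[ℂ] Matrix (Fin D) (Fin D) ℂ)
      (ρ : Matrix (Fin D) (Fin D) ℂ) (θ : ℝ)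
      (L : Matrix (Fin D) (Fin D) ℂ →ₗ[ℂ] ℂ),
    HasDerivAt (fun t : ℝ => L (rotChain σ n W (fun _ => t) ρ))
      (∑ i : Fin n,
        (L (rotChain σ n W (Function.update (fun _ => θ) i (θ + π / 2)) ρ) -
         L (rotChain σ n W (Function.update (fun _ => θ) i (θ - π / 2)) ρ)) / 2) θ := by
  intro n
  induction n with
  | zero =>
    intro W ρ θ L
    show HasDerivAt (fun _ : ℝ => L ((W 0) ρ)) _ θ
    simpa using hasDerivAt_const θ (L ((W 0) ρ))
  | succ n ih =>
    intro W ρ θ L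
    -- the inner chain
    set G : ℝ → Matrix (Fin D) (Fin D) ℂ :=
      fun t => rotChain σ n (fun i => W i.castSucc) (fun _ => t) ρ with hG
    -- functionals
    set L1 : Matrix (Fin D) (Fin D) ℂ →ₗ[ℂ] ℂ := L.comp (W (Fin.last (n + 1))) with hL1
    set La : Matrix (Fin D) (Fin D) ℂ →ₗ[ℂ] ℂ := L1.comp (LinearMap.mulRight ℂ σ) with hLa
    set Lb : Matrix (Fin D) (Fin D) ℂ →ₗ[ℂ] ℂ := L1.comp (LinearMap.mulLeft ℂ σ) with hLb
    set Lc : Matrix (Fin D) (Fin D) ℂ →ₗ[ℂ] ℂ :=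
      L1.comp ((LinearMap.mulRight ℂ σ).comp (LinearMap.mulLeft ℂ σ)) with hLc
    have hexp : ∀ (u : ℝ) (X : Matrix (Fin D) (Fin D) ℂ),
        L1 (pauliRotChannel σ u X) =
          ((Real.cos (u/2)) ^ 2 : ℂ) * L1 X
          + (Complex.I * Real.cos (u/2) * Real.sin (u/2)) * La X
          - (Complex.I * Real.cos (u/2) * Real.sin (u/2)) * Lb X
          + ((Real.sin (u/2)) ^ 2 : ℂ) * Lc X := by
      intro u X
      rw [channel_expand σ hherm]
      simp [hLa, hLb, hLc, smul_eq_mul, mul_assoc]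
    -- IH instances
    have h1 := ih (fun i => W i.castSucc) ρ θ L1
    have ha := ih (fun i => W i.castSucc) ρ θ La
    have hb := ih (fun i => W i.castSucc) ρ θ Lb
    have hc := ih (fun i => W i.castSucc) ρ θ Lc
    -- the function rewrite
    have hfun : (fun t : ℝ => L (rotChain σ (n + 1) W (fun _ => t) ρ)) =
        fun t : ℝ =>
          ((Real.cos (t/2)) ^ 2 : ℂ) * L1 (G t)
          + (Complex.I * Real.cos (t/2) * Real.sin (t/2)) * La (G t)
          - (Complex.I * Real.cos (t/2) * Real.sin (t/2)) * Lb (G t)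
          + ((Real.sin (t/2)) ^ 2 : ℂ) * Lc (G t) := by
      funext t
      rw [rotChain_succ]
      exact hexp t (G t)
    -- combined derivative
    have H := ((((hdC2 θ).mul h1).add ((hdCS θ).mul ha)).sub ((hdCS θ).mul hb)).add
      ((hdS2 θ).mul hc)
    rw [hfun]
    refine H.congr_deriv ?_
    symm
    -- now prove the sum equality
    rw [Fin.sum_univ_castSucc]
    -- rewriting the castSucc terms
    have hterm : ∀ (i : Fin n) (v : ℝ),
        rotChain σ (n + 1) W (Function.update (fun _ => θ) i.castSucc v) ρ =
          W (Fin.last (n + 1)) (pauliRotChannel σ θ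
            (rotChain σ n (fun i => W i.castSucc) (Function.update (fun _ => θ) i v) ρ)) := by
      intro i v
      rw [rotChain_succ]
      have e1 : Function.update (fun _ : Fin (n+1) => θ) i.castSucc v (Fin.last n) = θ := by
        apply Function.update_of_ne
        simp [Fin.ext_iff]
        omega
      have e2 : (fun j : Fin n =>
          Function.update (fun _ : Fin (n+1) => θ) i.castSucc v j.castSucc) =
          Function.update (fun _ : Fin n => θ) i v := by
        funext j
        simp [Function.update_apply, Fin.castSucc_inj]
      rw [e1, e2]
    have hlast : ∀ (v : ℝ),
        rotChain σ (n + 1) W (Function.update (fun _ => θ) (Fin.last n) v) ρ =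
          W (Fin.last (n + 1)) (pauliRotChannel σ v (G θ)) := by
      intro v
      rw [rotChain_succ]
      have e1 : Function.update (fun _ : Fin (n+1) => θ) (Fin.last n) v (Fin.last n) = v := by
        simp
      have e2 : (fun j : Fin n =>
          Function.update (fun _ : Fin (n+1) => θ) (Fin.last n) v j.castSucc) =
          fun _ : Fin n => θ := by
        funext j
        apply Function.update_of_ne
        simp [Fin.ext_iff]
        omega
      rw [e1, e2]
    -- rewrite each castSucc summand
    have e3 : ∀ i : Fin n,
        (L (rotChain σ (n+1) W (Function.update (fun _ => θ) i.castSucc (θ + π / 2)) ρ) -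
         L (rotChain σ (n+1) W (Function.update (fun _ => θ) i.castSucc (θ - π / 2)) ρ)) / 2 =
        ((Real.cos (θ/2)) ^ 2 : ℂ) *
          ((L1 (rotChain σ n (fun i => W i.castSucc) (Function.update (fun _ => θ) i (θ + π/2)) ρ)
           - L1 (rotChain σ n (fun i => W i.castSucc) (Function.update (fun _ => θ) i (θ - π/2)) ρ)) / 2)
        + (Complex.I * Real.cos (θ/2) * Real.sin (θ/2)) *
          ((La (rotChain σ n (fun i => W i.castSucc) (Function.update (fun _ => θ) i (θ + π/2)) ρ)
           - La (rotChain σ n (fun i => W i.castSucc) (Function.update (fun _ => θ) i (θ - π/2)) ρ)) / 2)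
        - (Complex.I * Real.cos (θ/2) * Real.sin (θ/2)) *
          ((Lb (rotChain σ n (fun i => W i.castSucc) (Function.update (fun _ => θ) i (θ + π/2)) ρ)
           - Lb (rotChain σ n (fun i => W i.castSucc) (Function.update (fun _ => θ) i (θ - π/2)) ρ)) / 2)
        + ((Real.sin (θ/2)) ^ 2 : ℂ) *
          ((Lc (rotChain σ n (fun i => W i.castSucc) (Function.update (fun _ => θ) i (θ + π/2)) ρ)
           - Lc (rotChain σ n (fun i => W i.castSucc) (Function.update (fun _ => θ) i (θ - π/2)) ρ)) / 2) := by
      intro i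
      have hL1app : ∀ X, L (W (Fin.last (n+1)) X) = L1 X := fun X => rfl
      rw [hterm i (θ + π/2), hterm i (θ - π/2)]
      simp only [hL1app]
      rw [hexp θ, hexp θ]
      ring
    rw [Finset.sum_congr rfl (fun i _ => e3 i)]
    rw [hlast (θ + π/2), hlast (θ - π/2)]
    have hL1app : ∀ X, L (W (Fin.last (n+1)) X) = L1 X := fun X => rfl
    simp only [hL1app]
    rw [hexp (θ + π/2), hexp (θ - π/2)]
    simp only [Finset.sum_add_distrib, Finset.sum_sub_distrib, ← Finset.mul_sum]
    linear_combination (L1 (G θ)) * shC2 θ + (La (G θ) - Lb (G θ)) * shCS θ +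
      (Lc (G θ)) * shS2 θ

/-- Parameter shift rule for repeated parameters: if the same Pauli rotation angle `θ`
appears in all `n` occurrences, then `f'(θ) = Σ_{i} (f_{i,+1} − f_{i,−1})/2` where
`f_{i,s}` shifts only the `i`-th occurrence by `sπ/2`. -/
theorem repeated_parameter_shift {D : ℕ} (σ : Matrix (Fin D) (Fin D) ℂ)
    (hherm : σᴴ = σ) (hinv : σ * σ = 1) (n : ℕ)
    (W : Fin (n + 1) → Matrix (Fin D) (Fin D) ℂ →ₗ[ℂ] Matrix (Fin D) (Fin D) ℂ)
    (O ρ : Matrix (Fin D) (Fin D) ℂ) (θ : ℝ) :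
    HasDerivAt (fun t : ℝ => (O * rotChain σ n W (fun _ => t) ρ).trace)
      (∑ i : Fin n,
        ((O * rotChain σ n W (Function.update (fun _ => θ) i (θ + π / 2)) ρ).trace -
         (O * rotChain σ n W (Function.update (fun _ => θ) i (θ - π / 2)) ρ).trace) / 2)
      θ := by
  have h := key σ hherm n W ρ θ
    ((Matrix.traceLinearMap (Fin D) ℂ ℂ).comp (LinearMap.mulLeft ℂ O))
  exact h
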